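/- Let ι be a countable type, w : ι → ℝ with w i > 0 for every i, and a : ι → ℝ with a i ≥ 0 for every i. Assume that F_n := ∑_i (w i)^{2n} · a i is finite for every natural number n. Then for all natural numbers N, p, q with p ≤ N and q ≥ 1, one has the interpolation (log-convexity) inequality F_N^{p+q} ≤ F_{N−p}^q · F_{N+q}^p. -/

import Mathlib

open scoped BigOperators

/-- the moment interpolation (log-convexity) inequality
`F N ^ (p+q) ≤ F (N-p) ^ q * F (N+q) ^ p` for the moments
`F n = ∑' i, (w i)^(2n) * a i`. -/
theorem moment_interpolation
    {ι : Type*} [Countable ι] (w a : ι → ℝ)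
    (hw : ∀ i, 0 < w i) (ha : ∀ i, 0 ≤ a i)
    (hF : ∀ n : ℕ, Summable fun i => w i ^ (2 * n) * a i)
    (F : ℕ → ℝ) (hFdef : ∀ n : ℕ, F n = ∑' i, w i ^ (2 * n) * a i) :
    ∀ N p q : ℕ, p ≤ N → 1 ≤ q →
      F N ^ (p + q) ≤ F (N - p) ^ q * F (N + q) ^ p := by
  intro N p q hpN hq
  have hterm : ∀ n i, 0 ≤ w i ^ (2 * n) * a i := fun n i =>
    mul_nonneg (pow_nonneg (hw i).le _) (ha i)
  have hFnonneg : ∀ n, 0 ≤ F n := fun n => by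
    rw [hFdef]; exact tsum_nonneg (fun i => hterm n i)
  rcases Nat.eq_zero_or_pos p with hp0 | hp
  · subst hp0
    simp
  -- p ≥ 1, q ≥ 1
  have hpq0 : (0:ℝ) < (p:ℝ) + q := by positivity
  set r : ℝ := ((p:ℝ) + q) / q with hr
  set s : ℝ := ((p:ℝ) + q) / p with hs
  have hq0 : (0:ℝ) < q := by exact_mod_cast hq
  have hp0 : (0:ℝ) < p := by exact_mod_cast hp
  have hconj : r.HolderConjugate s := by
    rw [Real.holderConjugate_iff]; constructor
    · rw [hr, lt_div_iff₀ hq0]; linarith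
    · rw [hr, hs]
      field_simp
      ring
  have hrinv : 1 / r = q / ((p:ℝ) + q) := by rw [hr, one_div_div]
  have hsinv : 1 / s = p / ((p:ℝ) + q) := by rw [hs, one_div_div]
  have hr0 : 0 < r := hconj.pos
  have hs0 : 0 < s := hconj.symm.pos
  set f : ι → ℝ := fun i => (w i ^ (2 * (N - p)) * a i) ^ (1/r) with hf
  set g : ι → ℝ := fun i => (w i ^ (2 * (N + q)) * a i) ^ (1/s) with hg
  have hfnn : ∀ i, 0 ≤ f i := fun i => Real.rpow_nonneg (hterm _ i) _
  have hgnn : ∀ i, 0 ≤ g i := fun i => Real.rpow_nonneg (hterm _ i) _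
  have hfr : (fun i => f i ^ r) = fun i => w i ^ (2 * (N - p)) * a i := by
    funext i
    simp only [hf]
    rw [← Real.rpow_mul (hterm _ i), one_div_mul_cancel hr0.ne', Real.rpow_one]
  have hgs : (fun i => g i ^ s) = fun i => w i ^ (2 * (N + q)) * a i := by
    funext i
    simp only [hg]
    rw [← Real.rpow_mul (hterm _ i), one_div_mul_cancel hs0.ne', Real.rpow_one]
  have hfg : (fun i => f i * g i) = fun i => w i ^ (2 * N) * a i := by
    funext i
    have hwnn := (hw i).le
    simp only [hf, hg]
    rw [Real.mul_rpow (pow_nonneg hwnn _) (ha i),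
      Real.mul_rpow (pow_nonneg hwnn _) (ha i)]
    have haa : a i ^ (1/r) * a i ^ (1/s) = a i := by
      rw [one_div, one_div, ← Real.rpow_add' (ha i) (by rw [hconj.inv_add_inv_eq_one]; norm_num),
        hconj.inv_add_inv_eq_one, Real.rpow_one]
    have hww : (w i ^ (2*(N-p))) ^ (1/r) * (w i ^ (2*(N+q))) ^ (1/s)
        = w i ^ (2*N) := by
      rw [← Real.rpow_natCast (w i) (2*(N-p)), ← Real.rpow_natCast (w i) (2*(N+q)),
        ← Real.rpow_natCast (w i) (2*N),
        ← Real.rpow_mul hwnn, ← Real.rpow_mul hwnn, ← Real.rpow_add (hw i)]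
      congr 1
      rw [hrinv, hsinv]
      have : ((2 * (N - p) : ℕ) : ℝ) = 2 * ((N:ℝ) - p) := by
        push_cast [hpN]; ring
      rw [this]
      push_cast
      field_simp
      ring
    calc (w i ^ (2*(N-p))) ^ (1/r) * a i ^ (1/r) * ((w i ^ (2*(N+q))) ^ (1/s) * a i ^ (1/s))
        = ((w i ^ (2*(N-p))) ^ (1/r) * (w i ^ (2*(N+q))) ^ (1/s)) * (a i ^ (1/r) * a i ^ (1/s)) := by ring
      _ = w i ^ (2*N) * a i := by rw [haa, hww]
  have hfsum : Summable fun i => f i ^ r := by rw [hfr]; exact hF (N - p)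
  have hgsum : Summable fun i => g i ^ s := by rw [hgs]; exact hF (N + q)
  have holder := Real.inner_le_Lp_mul_Lq_tsum_of_nonneg hconj hfnn hgnn hfsum hgsum
  rw [hfr, hgs] at holder
  have key : F N ≤ F (N - p) ^ (1/r) * F (N + q) ^ (1/s) := by
    rw [hFdef, hFdef, hFdef, ← hfg]
    exact holder
  -- raise both sides to power p+q
  have hRnn : 0 ≤ F (N - p) ^ (1/r) * F (N + q) ^ (1/s) :=
    mul_nonneg (Real.rpow_nonneg (hFnonneg _) _) (Real.rpow_nonneg (hFnonneg _) _)
  have hmono := pow_le_pow_left₀ (hFnonneg N) key (p + q)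
  refine hmono.trans_eq ?_
  rw [mul_pow, ← Real.rpow_natCast (F (N-p) ^ (1/r)) (p+q),
    ← Real.rpow_natCast (F (N+q) ^ (1/s)) (p+q),
    ← Real.rpow_mul (hFnonneg _), ← Real.rpow_mul (hFnonneg _)]
  have h1 : 1/r * ((p+q : ℕ) : ℝ) = (q:ℝ) := by
    rw [hrinv]; push_cast; field_simp
  have h2 : 1/s * ((p+q : ℕ) : ℝ) = (p:ℝ) := by
    rw [hsinv]; push_cast; field_simp
  rw [h1, h2, Real.rpow_natCast, Real.rpow_natCast]
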